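/- Let F be the free group on generators β₁, …, βₙ and let φ : F → ℤ be the length homomorphism sending each generator βᵢ to 1 ∈ ℤ. Then for any sequence of indices i₀, i₁, …, i_k ∈ {1,…,n} (not necessarily distinct), the closed product of commutators ⁅β_{i₀},β_{i₁}⁆·⁅β_{i₁},β_{i₂}⁆·⋯·⁅β_{i_{k−1}},β_{i_k}⁆·⁅β_{i_k},β_{i₀}⁆ belongs to ⁅ker φ, ker φ⁆. -/

import Mathlib

open scoped commutatorElement

/-- Let `F` be the free group on generators `β 1, …, β n` and `φ : F → ℤ` the
length homomorphism sending each generator to `1 ∈ ℤ` (here `ℤ` viewed multiplicatively).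
Then for any sequence of indices `i 0, …, i k` (not necessarily distinct), the closed
product of commutators `⁅β (i 0), β (i 1)⁆ ⋯ ⁅β (i (k-1)), β (i k)⁆ ⁅β (i k), β (i 0)⁆`
belongs to `⁅ker φ, ker φ⁆`. -/
theorem closed_commutator_product_mem_commutator_ker_freeGroup
    (n : ℕ) (φ : FreeGroup (Fin n) →* Multiplicative ℤ)
    (hφ : ∀ i : Fin n, φ (FreeGroup.of i) = Multiplicative.ofAdd 1)
    (k : ℕ) (i : ℕ → Fin n) :
    ((List.range k).map fun j =>
        ⁅FreeGroup.of (i j), FreeGroup.of (i (j + 1))⁆).prod *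
      ⁅FreeGroup.of (i k), FreeGroup.of (i 0)⁆ ∈ ⁅φ.ker, φ.ker⁆ := by
  set K : Subgroup (FreeGroup (Fin n)) := φ.ker with hK
  set N : Subgroup (FreeGroup (Fin n)) := ⁅K, K⁆ with hN
  haveI hKn : K.Normal := φ.normal_ker
  haveI : N.Normal := Subgroup.commutator_normal K K
  rw [← QuotientGroup.eq_one_iff]
  set π : FreeGroup (Fin n) →* FreeGroup (Fin n) ⧸ N := QuotientGroup.mk' N with hπ
  show π _ = 1
  -- elements of K commute in the quotient
  have hcomm : ∀ a b : FreeGroup (Fin n), a ∈ K → b ∈ K → π a * π b = π b * π a := by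
    intro a b ha hb
    have h1 : ⁅a, b⁆ ∈ N := Subgroup.commutator_mem_commutator ha hb
    have h2 : ⁅π a, π b⁆ = 1 := by
      rw [← map_commutatorElement]
      exact (QuotientGroup.eq_one_iff _).mpr h1
    exact commutatorElement_eq_one_iff_mul_comm.mp h2
  -- conjugation by a K-element is trivial on π(K)
  have hconj : ∀ c d : FreeGroup (Fin n), c ∈ K → d ∈ K → π (d * c * d⁻¹) = π c := by
    intro c d hc hd
    have := hcomm d c hd hc
    rw [map_mul, map_mul, map_inv, this]
    group
  have hmemβ : ∀ a b : Fin n, FreeGroup.of a * (FreeGroup.of b)⁻¹ ∈ K := by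
    intro a b
    rw [hK, MonoidHom.mem_ker, map_mul, map_inv, hφ, hφ, mul_inv_cancel]
  -- conjugation by any generator agrees with conjugation by β (i 0) on π(K)
  have hconjβ : ∀ c : FreeGroup (Fin n), c ∈ K → ∀ a : Fin n,
      π (FreeGroup.of a * c * (FreeGroup.of a)⁻¹)
        = π (FreeGroup.of (i 0) * c * (FreeGroup.of (i 0))⁻¹) := by
    intro c hc a
    have hd : FreeGroup.of a * (FreeGroup.of (i 0))⁻¹ ∈ K := hmemβ a (i 0)
    have heq : FreeGroup.of a * c * (FreeGroup.of a)⁻¹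
        = (FreeGroup.of a * (FreeGroup.of (i 0))⁻¹) *
            (FreeGroup.of (i 0) * c * (FreeGroup.of (i 0))⁻¹) *
          (FreeGroup.of a * (FreeGroup.of (i 0))⁻¹)⁻¹ := by group
    rw [heq]
    exact hconj _ _ (hKn.conj_mem c hc _) hd
  -- commutators of generators in the quotient
  have hcommex : ∀ a b : Fin n,
      π ⁅FreeGroup.of a, FreeGroup.of b⁆
        = π (FreeGroup.of a * (FreeGroup.of b)⁻¹) * π (FreeGroup.of (i 0)) *
            (π (FreeGroup.of a * (FreeGroup.of b)⁻¹))⁻¹ * (π (FreeGroup.of (i 0)))⁻¹ := by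
    intro a b
    have heq : ⁅FreeGroup.of a, FreeGroup.of b⁆
        = (FreeGroup.of a * (FreeGroup.of b)⁻¹) *
            (FreeGroup.of b * (FreeGroup.of a * (FreeGroup.of b)⁻¹)⁻¹ * (FreeGroup.of b)⁻¹) := by
      group
    rw [heq, map_mul, hconjβ _ (K.inv_mem (hmemβ a b)) b]
    simp only [map_mul, map_inv, mul_inv_rev, inv_inv]
    group
  -- the key multiplication rule for "commutators with u" of K-elements
  have hmul : ∀ d c : FreeGroup (Fin n), d ∈ K → c ∈ K →
      (π d * π (FreeGroup.of (i 0)) * (π d)⁻¹ * (π (FreeGroup.of (i 0)))⁻¹) *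
        (π c * π (FreeGroup.of (i 0)) * (π c)⁻¹ * (π (FreeGroup.of (i 0)))⁻¹)
      = π (d * c) * π (FreeGroup.of (i 0)) * (π (d * c))⁻¹ * (π (FreeGroup.of (i 0)))⁻¹ := by
    intro d c hd hc
    set u : FreeGroup (Fin n) := FreeGroup.of (i 0) with hu
    have hD : u * d⁻¹ * u⁻¹ ∈ K := hKn.conj_mem _ (K.inv_mem hd) u
    have hC : u * c⁻¹ * u⁻¹ ∈ K := hKn.conj_mem _ (K.inv_mem hc) u
    have e1 : π u * (π d)⁻¹ * (π u)⁻¹ = π (u * d⁻¹ * u⁻¹) := by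
      rw [map_mul, map_mul, map_inv, map_inv]
    have e2 : π u * (π c)⁻¹ * (π u)⁻¹ = π (u * c⁻¹ * u⁻¹) := by
      rw [map_mul, map_mul, map_inv, map_inv]
    have lhs_eq : (π d * π u * (π d)⁻¹ * (π u)⁻¹) * (π c * π u * (π c)⁻¹ * (π u)⁻¹)
        = π d * π (u * d⁻¹ * u⁻¹) * (π c * π (u * c⁻¹ * u⁻¹)) := by
      rw [← e1, ← e2]; group
    have rhs_eq : π (d * c) * π u * (π (d * c))⁻¹ * (π u)⁻¹
        = π d * (π c * π (u * c⁻¹ * u⁻¹)) * π (u * d⁻¹ * u⁻¹) := by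
      rw [← e1, ← e2, map_mul]; group
    rw [lhs_eq, rhs_eq, ← mul_assoc, mul_assoc (π d), hcomm _ _ hD hc,
      ← mul_assoc, mul_assoc, mul_assoc, hcomm _ _ hD hC, ← mul_assoc, ← mul_assoc]
    group
  -- main induction
  have main : ∀ m : ℕ,
      π (((List.range m).map fun j =>
          ⁅FreeGroup.of (i j), FreeGroup.of (i (j + 1))⁆).prod)
        = π (FreeGroup.of (i 0) * (FreeGroup.of (i m))⁻¹) * π (FreeGroup.of (i 0)) *
            (π (FreeGroup.of (i 0) * (FreeGroup.of (i m))⁻¹))⁻¹ *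
              (π (FreeGroup.of (i 0)))⁻¹ := by
    intro m
    induction m with
    | zero => simp
    | succ m ih =>
      rw [List.range_succ, List.map_append, List.prod_append, map_mul, ih]
      simp only [List.map_cons, List.map_nil, List.prod_cons, List.prod_nil, mul_one]
      rw [hcommex (i m) (i (m + 1)),
        hmul _ _ (hmemβ (i 0) (i m)) (hmemβ (i m) (i (m + 1)))]
      have : FreeGroup.of (i 0) * (FreeGroup.of (i m))⁻¹ *
          (FreeGroup.of (i m) * (FreeGroup.of (i (m + 1)))⁻¹)
          = FreeGroup.of (i 0) * (FreeGroup.of (i (m + 1)))⁻¹ := by group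
      rw [this]
  rw [map_mul, main k, hcommex (i k) (i 0),
    hmul _ _ (hmemβ (i 0) (i k)) (hmemβ (i k) (i 0))]
  have : FreeGroup.of (i 0) * (FreeGroup.of (i k))⁻¹ *
      (FreeGroup.of (i k) * (FreeGroup.of (i 0))⁻¹) = 1 := by group
  rw [this]
  simp
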